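/- (CBF Backstepping.) Let h : ℝᵖ → ℝ be continuously differentiable, let f̄ : ℝᵖ → ℝᵖ and Ḡ : ℝᵖ → ℝ^{p×r} be maps, let α₀ : ℝ → ℝ be an extended class-K∞ function, and let k : ℝᵖ → ℝʳ be continuously differentiable with ⟨∇h(η), f̄(η) + Ḡ(η)k(η)⟩ > −α₀(h(η)) for all η ∈ ℝᵖ. Let f₁ : ℝᵖ × ℝʳ → ℝʳ be any map, and let G₁ : ℝᵖ × ℝʳ → ℝ^{r×m} be such that for every (η, z) the map w ↦ G₁(η,z)ᵀw is injective on ℝʳ (full row rank). For β > 0 define h₁(η, z) = h(η) − (1/(2β))‖z − k(η)‖². Then for every extended class-K∞ function α₁ with α₁(s) ≥ α₀(s) for all s ∈ ℝ, and for every (η, z) ∈ ℝᵖ × ℝʳ, one has sup_{υ ∈ ℝᵐ} ⟨∇h₁(η,z), (f̄(η) + Ḡ(η)z, f₁(η,z) + G₁(η,z)υ)⟩ > −α₁(h₁(η,z)). -/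

import Mathlib

open scoped RealInnerProductSpace

lemma surj_of_adjoint_inj {m r : ℕ}
    (T : EuclideanSpace ℝ (Fin m) →L[ℝ] EuclideanSpace ℝ (Fin r))
    (hT : Function.Injective T.adjoint) : Function.Surjective T := by
  have hbot : (LinearMap.range (T : EuclideanSpace ℝ (Fin m) →ₗ[ℝ] EuclideanSpace ℝ (Fin r)))ᗮ = ⊥ := by
    rw [Submodule.eq_bot_iff]
    intro y hy
    have hTy : T.adjoint y = 0 := by
      rw [← inner_self_eq_zero (𝕜 := ℝ) (x := T.adjoint y),
        ContinuousLinearMap.adjoint_inner_left, real_inner_comm]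
      exact (Submodule.mem_orthogonal _ y).mp hy _ (LinearMap.mem_range_self _ _)
    exact hT (by simpa using hTy)
  exact LinearMap.range_eq_top.mp (Submodule.orthogonal_eq_bot_iff.mp hbot)

theorem stmt_17 {p r m : ℕ}
    (h : EuclideanSpace ℝ (Fin p) → ℝ)
    (hh : ContDiff ℝ 1 h)
    (fb : EuclideanSpace ℝ (Fin p) → EuclideanSpace ℝ (Fin p))
    (Gb : EuclideanSpace ℝ (Fin p) →
      (EuclideanSpace ℝ (Fin r) →L[ℝ] EuclideanSpace ℝ (Fin p)))
    (α₀ : ℝ → ℝ)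
    (hα₀cont : Continuous α₀)
    (hα₀mono : StrictMono α₀)
    (hα₀0 : α₀ 0 = 0)
    (hα₀top : Filter.Tendsto α₀ Filter.atTop Filter.atTop)
    (hα₀bot : Filter.Tendsto α₀ Filter.atBot Filter.atBot)
    (k : EuclideanSpace ℝ (Fin p) → EuclideanSpace ℝ (Fin r))
    (hk : ContDiff ℝ 1 k)
    (hCBF : ∀ η, ⟪gradient h η, fb η + Gb η (k η)⟫ > -α₀ (h η))
    (f₁ : EuclideanSpace ℝ (Fin p) × EuclideanSpace ℝ (Fin r) →
      EuclideanSpace ℝ (Fin r))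
    (G₁ : EuclideanSpace ℝ (Fin p) × EuclideanSpace ℝ (Fin r) →
      (EuclideanSpace ℝ (Fin m) →L[ℝ] EuclideanSpace ℝ (Fin r)))
    (hG₁ : ∀ w, Function.Injective ((G₁ w).adjoint))
    (β : ℝ) (hβ : 0 < β)
    (α₁ : ℝ → ℝ)
    (hα₁cont : Continuous α₁)
    (hα₁mono : StrictMono α₁)
    (hα₁0 : α₁ 0 = 0)
    (hα₁top : Filter.Tendsto α₁ Filter.atTop Filter.atTop)
    (hα₁bot : Filter.Tendsto α₁ Filter.atBot Filter.atBot)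
    (hα₁ge : ∀ s : ℝ, α₀ s ≤ α₁ s) :
    let e := WithLp.equiv 2
      (EuclideanSpace ℝ (Fin p) × EuclideanSpace ℝ (Fin r))
    let h₁ : WithLp 2 (EuclideanSpace ℝ (Fin p) × EuclideanSpace ℝ (Fin r)) → ℝ :=
      fun w => h (e w).1 - 1 / (2 * β) * ‖(e w).2 - k (e w).1‖ ^ 2
    ∀ (η : EuclideanSpace ℝ (Fin p)) (z : EuclideanSpace ℝ (Fin r)),
      ∃ υ : EuclideanSpace ℝ (Fin m),
        ⟪gradient h₁ (e.symm (η, z)),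
            e.symm (fb η + Gb η z, f₁ (η, z) + G₁ (η, z) υ)⟫ >
          -α₁ (h₁ (e.symm (η, z))) := by
  intro e h₁ η z
  have hsurj : Function.Surjective (G₁ (η, z)) := surj_of_adjoint_inj _ (hG₁ (η, z))
  set c : ℝ := 1 / (2 * β) with hc
  have hcpos : 0 < c := by positivity
  set u : EuclideanSpace ℝ (Fin r) := z - k η with hu
  set w : WithLp 2 (EuclideanSpace ℝ (Fin p) × EuclideanSpace ℝ (Fin r)) := e.symm (η, z) with hw
  set L := WithLp.prodContinuousLinearEquiv 2 ℝ (EuclideanSpace ℝ (Fin p)) (EuclideanSpace ℝ (Fin r)) with hL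
  set P1 : WithLp 2 (EuclideanSpace ℝ (Fin p) × EuclideanSpace ℝ (Fin r)) →L[ℝ] EuclideanSpace ℝ (Fin p) :=
    (ContinuousLinearMap.fst ℝ _ _).comp L.toContinuousLinearMap with hP1
  set P2 : WithLp 2 (EuclideanSpace ℝ (Fin p) × EuclideanSpace ℝ (Fin r)) →L[ℝ] EuclideanSpace ℝ (Fin r) :=
    (ContinuousLinearMap.snd ℝ _ _).comp L.toContinuousLinearMap with hP2
  have hP1w : P1 w = η := rfl
  have hP2w : P2 w = z := rfl
  set Dk := fderiv ℝ k η with hDk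
  set g : WithLp 2 (EuclideanSpace ℝ (Fin p) × EuclideanSpace ℝ (Fin r)) → EuclideanSpace ℝ (Fin r) :=
    fun w0 => P2 w0 - k (P1 w0) with hgdef
  have hgw : g w = u := rfl
  set Dg : WithLp 2 (EuclideanSpace ℝ (Fin p) × EuclideanSpace ℝ (Fin r)) →L[ℝ] EuclideanSpace ℝ (Fin r) :=
    P2 - Dk.comp P1 with hDg
  have hgd : HasFDerivAt g Dg w := by
    refine (P2.hasFDerivAt).sub ?_
    have h1 : HasFDerivAt k Dk (P1 w) := by
      rw [hP1w]; exact ((hk.differentiable one_ne_zero) η).hasFDerivAt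
    exact h1.comp w P1.hasFDerivAt
  have hhd : HasFDerivAt (fun w0 => h (P1 w0)) ((fderiv ℝ h η).comp P1) w := by
    have h1 : HasFDerivAt h (fderiv ℝ h η) (P1 w) := by
      rw [hP1w]; exact ((hh.differentiable one_ne_zero) η).hasFDerivAt
    exact h1.comp w P1.hasFDerivAt
  set D : WithLp 2 (EuclideanSpace ℝ (Fin p) × EuclideanSpace ℝ (Fin r)) →L[ℝ] ℝ :=
    ((fderiv ℝ h η).comp P1) - c • ((fderivInnerCLM ℝ (g w, g w)).comp (Dg.prod Dg)) with hD
  have hfun : h₁ = fun w0 => h (P1 w0) - c * ⟪g w0, g w0⟫ := by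
    funext w0
    show h (e w0).1 - c * ‖(e w0).2 - k (e w0).1‖ ^ 2 = _
    rw [real_inner_self_eq_norm_sq]
    rfl
  have hmain : HasFDerivAt h₁ D w := by
    rw [hfun]
    exact hhd.sub ((hgd.inner ℝ hgd).const_mul c)
  have hgrad : gradient h₁ w = (InnerProductSpace.toDual ℝ _).symm D :=
    (hasFDerivAt_iff_hasGradientAt.mp hmain).gradient
  have hfdh : fderiv ℝ h η = InnerProductSpace.toDual ℝ _ (gradient h η) :=
    (hasGradientAt_iff_hasFDerivAt.mp ((hh.differentiable one_ne_zero) η).hasGradientAt).fderiv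
  have hip : ∀ A B, ⟪gradient h₁ w, e.symm (A, B)⟫
      = ⟪gradient h η, A⟫ - c * (2 * ⟪u, B - Dk A⟫) := by
    intro A B
    rw [hgrad, InnerProductSpace.toDual_symm_apply]
    have e1 : P1 (e.symm (A, B)) = A := rfl
    have e2 : P2 (e.symm (A, B)) = B := rfl
    have e3 : Dg (e.symm (A, B)) = B - Dk A := by
      simp only [hDg, ContinuousLinearMap.sub_apply, ContinuousLinearMap.comp_apply, e1, e2]
    simp only [hD, ContinuousLinearMap.sub_apply, ContinuousLinearMap.coe_smul',
      Pi.smul_apply, ContinuousLinearMap.comp_apply, ContinuousLinearMap.prod_apply,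
      fderivInnerCLM_apply, hgw, e1, e2, e3, hfdh, InnerProductSpace.toDual_apply_apply,
      smul_eq_mul]
    rw [real_inner_comm (B - Dk A) u]
    ring
  have h₁w : h₁ w = h η - c * ‖u‖ ^ 2 := rfl
  by_cases hu0 : u = 0
  · refine ⟨0, ?_⟩
    rw [hip]
    have hz : z = k η := by rw [hu] at hu0; rwa [sub_eq_zero] at hu0
    rw [hu0]
    simp only [inner_zero_left, mul_zero, sub_zero]
    have h₁w' : h₁ w = h η := by rw [h₁w, hu0]; simp
    rw [h₁w', hz]
    calc -α₁ (h η) ≤ -α₀ (h η) := neg_le_neg (hα₁ge _)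
      _ < ⟪gradient h η, fb η + Gb η (k η)⟫ := hCBF η
  · have hnorm : 0 < ‖u‖ ^ 2 := pow_pos (norm_pos_iff.mpr hu0) 2
    set A : EuclideanSpace ℝ (Fin p) := fb η + Gb η z with hA
    set X : ℝ := ⟪gradient h η, A⟫ with hX
    set Y : ℝ := -α₁ (h₁ w) with hY
    set C : ℝ := (max 0 (Y - X) + 1) / (2 * c * ‖u‖ ^ 2) with hC
    set B : EuclideanSpace ℝ (Fin r) := Dk A - C • u with hB
    obtain ⟨υ, hυ⟩ := hsurj (B - f₁ (η, z))
    refine ⟨υ, ?_⟩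
    have hBB : f₁ (η, z) + G₁ (η, z) υ = B := by rw [hυ]; abel
    rw [hBB, hip A B]
    have e4 : B - Dk A = -(C • u) := by rw [hB]; abel
    rw [e4, inner_neg_right, real_inner_smul_right, real_inner_self_eq_norm_sq]
    have h2 : 2 * c * C * ‖u‖ ^ 2 = max 0 (Y - X) + 1 := by
      rw [hC]; field_simp
    have h3 : Y - X ≤ max 0 (Y - X) := le_max_right _ _
    rw [← hX]
    show X - c * (2 * -(C * ‖u‖ ^ 2)) > Y
    have h4 : X - c * (2 * -(C * ‖u‖ ^ 2)) = X + 2 * c * C * ‖u‖ ^ 2 := by ring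
    rw [h4, h2]
    linarith [h3]
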